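/- Let H be a Q-graded Hopf quasigroup. Then the antipode is anti-multiplicative: S_{pq}(hg) = S_q(g)S_p(h) for all p,q in Q, h in H_p, g in H_q. -/

import Mathlib

open TensorProduct

universe u v w

/-- A quasigroup: a set with product, identity `e`, and two-sided inverses satisfying
`p⁻¹(pq) = q` and `(qp)p⁻¹ = q`. -/
structure QuasigroupStruct (Q : Type u) where
  mul : Q → Q → Q
  one : Q
  inv : Q → Q
  mul_one : ∀ p, mul p one = p
  one_mul : ∀ p, mul one p = p
  inv_mul_cancel : ∀ p q, mul (inv p) (mul p q) = q
  mul_inv_cancel : ∀ p q, mul (mul q p) (inv p) = q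

namespace QuasigroupStruct

variable {Q : Type u} (G : QuasigroupStruct Q)

lemma inv_mul_self (p : Q) : G.mul (G.inv p) p = G.one := by
  have h := G.inv_mul_cancel p G.one
  rwa [G.mul_one] at h

lemma mul_inv_self (p : Q) : G.mul p (G.inv p) = G.one := by
  have h := G.mul_inv_cancel p G.one
  rwa [G.one_mul] at h

lemma inv_inv (p : Q) : G.inv (G.inv p) = p := by
  have h := G.inv_mul_cancel (G.inv p) p
  rw [G.inv_mul_self p] at h
  rwa [G.mul_one] at h

lemma mul_inv_cancel_left (p q : Q) : G.mul p (G.mul (G.inv p) q) = q := by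
  have h := G.inv_mul_cancel (G.inv p) q
  rwa [G.inv_inv] at h

lemma inv_mul_cancel_right (p q : Q) : G.mul (G.mul q (G.inv p)) p = q := by
  have h := G.mul_inv_cancel (G.inv p) q
  rwa [G.inv_inv] at h

lemma mul_inv_rev (p q : Q) : G.inv (G.mul p q) = G.mul (G.inv q) (G.inv p) := by
  have h1 : G.mul q (G.inv (G.mul p q)) = G.inv p := by
    have h := G.mul_inv_cancel (G.mul p q) (G.inv p)
    rwa [G.inv_mul_cancel p q] at h
  calc G.inv (G.mul p q)
      = G.mul (G.inv q) (G.mul q (G.inv (G.mul p q))) := (G.inv_mul_cancel q _).symm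
    _ = G.mul (G.inv q) (G.inv p) := by rw [h1]

lemma inv_one : G.inv G.one = G.one := by
  have h := G.inv_mul_cancel G.one G.one
  rwa [G.one_mul, G.mul_one] at h

end QuasigroupStruct

/-- Transport along an equality of grades, as a linear map. -/
def gcl {Q : Type u} {H : Q → Type w} {k : Type v} [CommSemiring k]
    [∀ p, AddCommMonoid (H p)] [∀ p, Module k (H p)] {p q : Q} (e : p = q) :
    H p →ₗ[k] H q := by subst e; exact LinearMap.id

/-- A `Q`-graded Hopf quasigroup: a family of coassociative counital coalgebras `H p`
with a (not necessarily associative) graded multiplication, unit and antipode family,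
such that the multiplications and the unit are coalgebra maps and the antipode
satisfies the Hopf quasigroup axioms. -/
structure GradedHopfQuasigroup (k : Type v) [CommRing k] {Q : Type u} (G : QuasigroupStruct Q)
    (H : Q → Type w) [∀ p, AddCommGroup (H p)] [∀ p, Module k (H p)]
    [∀ p, Coalgebra k (H p)] where
  mul : ∀ p q, H p →ₗ[k] H q →ₗ[k] H (G.mul p q)
  one : H G.one
  antipode : ∀ p, H p →ₗ[k] H (G.inv p)
  mul_one' : ∀ (p : Q) (h : H p), gcl (k := k) (G.mul_one p) ((mul p G.one h) one) = h
  one_mul' : ∀ (p : Q) (h : H p), gcl (k := k) (G.one_mul p) ((mul G.one p one) h) = h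
  comul_mul : ∀ (p q : Q) (h : H p) (g : H q),
    Coalgebra.comul (R := k) ((mul p q h) g) =
      (TensorProduct.map (TensorProduct.lift (mul p q)) (TensorProduct.lift (mul p q)))
        ((TensorProduct.tensorTensorTensorComm k (H p) (H p) (H q) (H q))
          (Coalgebra.comul h ⊗ₜ[k] Coalgebra.comul g))
  counit_mul : ∀ (p q : Q) (h : H p) (g : H q),
    Coalgebra.counit (R := k) ((mul p q h) g) =
      Coalgebra.counit (R := k) h * Coalgebra.counit (R := k) g
  comul_one : Coalgebra.comul (R := k) one = one ⊗ₜ[k] one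
  counit_one : Coalgebra.counit (R := k) one = 1
  /-- `S (h₁) (h₂ g) = ε(h) g` -/
  antipode_mul_left : ∀ (p q : Q) (h : H p) (g : H q),
    TensorProduct.lift
      (((mul (G.inv p) (G.mul p q)).comp (antipode p)).compl₂ ((mul p q).flip g))
      (Coalgebra.comul h)
      = gcl (k := k) (G.inv_mul_cancel p q).symm (Coalgebra.counit (R := k) h • g)
  /-- `h₁ (S (h₂) g) = ε(h) g` -/
  antipode_mul_left' : ∀ (p q : Q) (h : H p) (g : H q),
    TensorProduct.lift
      ((mul p (G.mul (G.inv p) q)).compl₂ (((mul (G.inv p) q).flip g).comp (antipode p)))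
      (Coalgebra.comul h)
      = gcl (k := k) (G.mul_inv_cancel_left p q).symm (Coalgebra.counit (R := k) h • g)
  /-- `(g S (h₁)) h₂ = ε(h) g` -/
  antipode_mul_right : ∀ (p q : Q) (h : H p) (g : H q),
    TensorProduct.lift
      ((mul (G.mul q (G.inv p)) p).comp ((mul q (G.inv p) g).comp (antipode p)))
      (Coalgebra.comul h)
      = gcl (k := k) (G.inv_mul_cancel_right p q).symm (Coalgebra.counit (R := k) h • g)
  /-- `(g h₁) S (h₂) = ε(h) g` -/
  antipode_mul_right' : ∀ (p q : Q) (h : H p) (g : H q),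
    TensorProduct.lift
      (((mul (G.mul q p) (G.inv p)).comp (mul q p g)).compl₂ (antipode p))
      (Coalgebra.comul h)
      = gcl (k := k) (G.mul_inv_cancel p q).symm (Coalgebra.counit (R := k) h • g)

variable {k : Type v} [Field k] {Q : Type u} {G : QuasigroupStruct Q}
  {H : Q → Type w} [∀ p, AddCommGroup (H p)] [∀ p, Module k (H p)]
  [∀ p, Coalgebra k (H p)]

section Helpers

open Coalgebra

variable {p' q' r' : Q}

lemma gcl_gcl (e : p' = q') (f : q' = r') (x : H p') :
    gcl (k := k) f (gcl (k := k) e x) = gcl (k := k) (e.trans f) x := by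
  subst e; subst f; rfl

lemma gcl_cancel (e : p' = q') (x : H p') :
    gcl (k := k) e.symm (gcl (k := k) e x) = x := by subst e; rfl

lemma eq_gcl_symm {e : p' = q'} {x : H p'} {y : H q'} (hxy : gcl (k := k) e x = y) :
    x = gcl (k := k) e.symm y := by subst e; exact hxy

lemma mul_gcl_right (A : GradedHopfQuasigroup k G H) {a b b' : Q} (e : b = b')
    (x : H a) (y : H b) :
    A.mul a b' x (gcl (k := k) e y) = gcl (k := k) (congrArg (G.mul a) e) (A.mul a b x y) := by
  subst e; rfl

lemma mul_gcl_left (A : GradedHopfQuasigroup k G H) {a a' b : Q} (e : a = a')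
    (x : H a) (y : H b) :
    A.mul a' b (gcl (k := k) e x) y
      = gcl (k := k) (congrArg (fun t => G.mul t b) e) (A.mul a b x y) := by
  subst e; rfl

/-- pointwise form of the counit axiom: `∑ ε(h₂) h₁ = h`. -/
lemma sum_counit_smul_right {M : Type w} [AddCommGroup M] [Module k M] [Coalgebra k M]
    {ι : Type*} (a : M) (r : Coalgebra.Repr k a ι) :
    ∑ i ∈ r.index, Coalgebra.counit (R := k) (r.right i) • r.left i = a := by
  have h2 := Coalgebra.sum_tmul_counit_eq r
  have h3 := congrArg (TensorProduct.rid k M) h2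
  simp only [map_sum, TensorProduct.rid_tmul, one_smul] at h3
  exact h3

/-- pointwise form of the counit axiom: `∑ ε(h₁) h₂ = h`. -/
lemma sum_counit_smul_left {M : Type w} [AddCommGroup M] [Module k M] [Coalgebra k M]
    {ι : Type*} (a : M) (r : Coalgebra.Repr k a ι) :
    ∑ i ∈ r.index, Coalgebra.counit (R := k) (r.left i) • r.right i = a := by
  have h2 := Coalgebra.sum_counit_tmul_eq r
  have h3 := congrArg (TensorProduct.lid k M) h2
  simp only [map_sum, TensorProduct.lid_tmul, one_smul] at h3
  exact h3

/-- pointwise form of axiom `S(h₁)(h₂ g) = ε(h) g`, for an arbitrary representation. -/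
lemma ax1_pt (A : GradedHopfQuasigroup k G H) (a b : Q) (h' : H a) (g' : H b)
    {ι : Type*} (ρ : Coalgebra.Repr k h' ι) :
    ∑ m ∈ ρ.index,
      A.mul (G.inv a) (G.mul a b) (A.antipode a (ρ.left m)) (A.mul a b (ρ.right m) g')
      = gcl (k := k) (G.inv_mul_cancel a b).symm (Coalgebra.counit (R := k) h' • g') := by
  have := A.antipode_mul_left a b h' g'
  rw [← ρ.eq] at this
  simpa [map_sum, TensorProduct.lift.tmul] using this

/-- pointwise form of axiom `(g h₁) S(h₂) = ε(h) g`, for an arbitrary representation. -/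
lemma ax4_pt (A : GradedHopfQuasigroup k G H) (a b : Q) (h' : H a) (g' : H b)
    {ι : Type*} (ρ : Coalgebra.Repr k h' ι) :
    ∑ m ∈ ρ.index,
      A.mul (G.mul b a) (G.inv a) (A.mul b a g' (ρ.left m)) (A.antipode a (ρ.right m))
      = gcl (k := k) (G.mul_inv_cancel a b).symm (Coalgebra.counit (R := k) h' • g') := by
  have := A.antipode_mul_right' a b h' g'
  rw [← ρ.eq] at this
  simpa [map_sum, TensorProduct.lift.tmul] using this

end Helpers
set_option linter.unusedSectionVars false

section Helpers2

open Coalgebra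

/-- The representation of `comul (h*g)` induced by representations of `comul h`, `comul g`. -/
noncomputable def mulRepr (A : GradedHopfQuasigroup k G H) (a b : Q) (h' : H a) (g' : H b)
    {ι κ : Type*} (rh : Coalgebra.Repr k h' ι) (rg : Coalgebra.Repr k g' κ) :
    Coalgebra.Repr k (A.mul a b h' g') (ι × κ) where
  index := rh.index ×ˢ rg.index
  left := fun i => A.mul a b (rh.left i.1) (rg.left i.2)
  right := fun i => A.mul a b (rh.right i.1) (rg.right i.2)
  eq := by
    rw [A.comul_mul a b h' g', ← rh.eq, ← rg.eq]
    rw [TensorProduct.sum_tmul]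
    simp only [TensorProduct.tmul_sum, map_sum,
      TensorProduct.tensorTensorTensorComm_tmul, TensorProduct.map_tmul,
      TensorProduct.lift.tmul]
    rw [Finset.sum_product]

/-- Transfer of a triple sum along coassociativity. -/
lemma coassoc_tri {M X : Type*} [AddCommGroup M] [Module k M] [Coalgebra k M]
    [AddCommGroup X] [Module k X]
    {ι κ Λ : Type*} (a : M) (r : Coalgebra.Repr k a ι)
    (r₁ : ∀ i : ι, Coalgebra.Repr k (r.left i) κ)
    (r₂ : ∀ i : ι, Coalgebra.Repr k (r.right i) Λ)
    (Φ : M →ₗ[k] M →ₗ[k] M →ₗ[k] X) :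
    ∑ i ∈ r.index, ∑ j ∈ (r₁ i).index,
        Φ ((r₁ i).left j) ((r₁ i).right j) (r.right i)
      = ∑ i ∈ r.index, ∑ j ∈ (r₂ i).index,
        Φ (r.left i) ((r₂ i).left j) ((r₂ i).right j) := by
  have key := Coalgebra.sum_tmul_tmul_eq r (fun i => r₁ i) (fun i => r₂ i)
  have := congrArg (TensorProduct.lift ((TensorProduct.uncurry (RingHom.id k) M M X).comp Φ)) key
  simpa [map_sum, TensorProduct.lift.tmul, TensorProduct.uncurry_apply] using this

end Helpers2
section Steps

open Coalgebra

/-- Step A: `∑ (S(h₁ g) h₂) S(h₃) = S(hg)` (up to grade transport), by the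
axiom `(y h₁)S(h₂) = ε(h) y` and the counit law. -/
lemma stepA (A : GradedHopfQuasigroup k G H) (p q : Q) (h : H p) (g : H q)
    {ι κ : Type*} (rh : Coalgebra.Repr k h ι) (rh2 : ∀ i : ι, Coalgebra.Repr k (rh.right i) κ) :
    ∑ i ∈ rh.index, ∑ j ∈ (rh2 i).index,
      A.mul (G.mul (G.inv (G.mul p q)) p) (G.inv p)
        (A.mul (G.inv (G.mul p q)) p
          (A.antipode (G.mul p q) (A.mul p q (rh.left i) g)) ((rh2 i).left j))
        (A.antipode p ((rh2 i).right j))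
      = gcl (k := k) (G.mul_inv_cancel p (G.inv (G.mul p q))).symm
          (A.antipode (G.mul p q) (A.mul p q h g)) := by
  have e1 : ∀ i ∈ rh.index,
      (∑ j ∈ (rh2 i).index,
        A.mul (G.mul (G.inv (G.mul p q)) p) (G.inv p)
          (A.mul (G.inv (G.mul p q)) p
            (A.antipode (G.mul p q) (A.mul p q (rh.left i) g)) ((rh2 i).left j))
          (A.antipode p ((rh2 i).right j)))
      = gcl (k := k) (G.mul_inv_cancel p (G.inv (G.mul p q))).symm
          (Coalgebra.counit (R := k) (rh.right i)
            • A.antipode (G.mul p q) (A.mul p q (rh.left i) g)) :=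
    fun i _ => ax4_pt A p (G.inv (G.mul p q)) (rh.right i) _ (rh2 i)
  rw [Finset.sum_congr rfl e1, ← map_sum]
  congr 1
  conv_rhs => rw [show h = ∑ i ∈ rh.index, Coalgebra.counit (R := k) (rh.right i) • rh.left i
    from (sum_counit_smul_right h rh).symm]
  simp [map_sum, map_smul, LinearMap.sum_apply, LinearMap.smul_apply]

/-- Step G: expanding `g` and re-absorbing the counit factor via `(x g₁)S(g₂) = ε(g) x`. -/
lemma stepG (A : GradedHopfQuasigroup k G H) (p q : Q) (g : H q)
    {ι κ : Type*} (rg : Coalgebra.Repr k g ι) (rg2 : ∀ i : ι, Coalgebra.Repr k (rg.right i) κ)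
    (x1 x2 x3 : H p) :
    ∑ kk ∈ rg.index, ∑ l ∈ (rg2 kk).index,
      A.mul (G.mul (G.inv (G.mul p q)) p) (G.inv p)
        (A.mul (G.inv (G.mul p q)) p
          (A.antipode (G.mul p q) (A.mul p q x1 (rg.left kk)))
          (gcl (k := k) (G.mul_inv_cancel q p)
            (A.mul (G.mul p q) (G.inv q)
              (A.mul p q x2 ((rg2 kk).left l))
              (A.antipode q ((rg2 kk).right l)))))
        (A.antipode p x3)
      = A.mul (G.mul (G.inv (G.mul p q)) p) (G.inv p)
          (A.mul (G.inv (G.mul p q)) p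
            (A.antipode (G.mul p q) (A.mul p q x1 g)) x2)
          (A.antipode p x3) := by
  have step : ∀ kk ∈ rg.index,
      (∑ l ∈ (rg2 kk).index,
        A.mul (G.mul (G.inv (G.mul p q)) p) (G.inv p)
          (A.mul (G.inv (G.mul p q)) p
            (A.antipode (G.mul p q) (A.mul p q x1 (rg.left kk)))
            (gcl (k := k) (G.mul_inv_cancel q p)
              (A.mul (G.mul p q) (G.inv q)
                (A.mul p q x2 ((rg2 kk).left l))
                (A.antipode q ((rg2 kk).right l)))))
          (A.antipode p x3))
      = Coalgebra.counit (R := k) (rg.right kk) •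
          A.mul (G.mul (G.inv (G.mul p q)) p) (G.inv p)
            (A.mul (G.inv (G.mul p q)) p
              (A.antipode (G.mul p q) (A.mul p q x1 (rg.left kk))) x2)
            (A.antipode p x3) := by
    intro kk _
    have fold : ∑ l ∈ (rg2 kk).index,
        A.mul (G.mul (G.inv (G.mul p q)) p) (G.inv p)
          (A.mul (G.inv (G.mul p q)) p
            (A.antipode (G.mul p q) (A.mul p q x1 (rg.left kk)))
            (gcl (k := k) (G.mul_inv_cancel q p)
              (A.mul (G.mul p q) (G.inv q)
                (A.mul p q x2 ((rg2 kk).left l))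
                (A.antipode q ((rg2 kk).right l)))))
          (A.antipode p x3)
        = A.mul (G.mul (G.inv (G.mul p q)) p) (G.inv p)
          (A.mul (G.inv (G.mul p q)) p
            (A.antipode (G.mul p q) (A.mul p q x1 (rg.left kk)))
            (gcl (k := k) (G.mul_inv_cancel q p)
              (∑ l ∈ (rg2 kk).index,
                A.mul (G.mul p q) (G.inv q)
                  (A.mul p q x2 ((rg2 kk).left l))
                  (A.antipode q ((rg2 kk).right l)))))
          (A.antipode p x3) := by
      simp only [map_sum, LinearMap.sum_apply]
    rw [fold, ax4_pt A q p (rg.right kk) x2 (rg2 kk)]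
    have can : gcl (k := k) (G.mul_inv_cancel q p)
        (gcl (k := k) (G.mul_inv_cancel q p).symm
          (Coalgebra.counit (R := k) (rg.right kk) • x2))
        = Coalgebra.counit (R := k) (rg.right kk) • x2 := gcl_cancel _ _
    rw [can]
    simp [map_smul, LinearMap.smul_apply]
  rw [Finset.sum_congr rfl step]
  conv_rhs => rw [show g = ∑ kk ∈ rg.index, Coalgebra.counit (R := k) (rg.right kk) • rg.left kk
    from (sum_counit_smul_right g rg).symm]
  simp [map_sum, map_smul, LinearMap.sum_apply, LinearMap.smul_apply]

end Steps
section StepC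

open Coalgebra

/-- Step C: the collapse `∑ S(h₁g₁)((h₂g₂)S(g₃)) ⊗ S(h₃)`-style sum via the axiom
`S(m₁)(m₂ x) = ε(m) x` applied to `m = h₁ g₁`. -/
lemma stepC (A : GradedHopfQuasigroup k G H) (p q : Q) (h1 x3 : H p) (g1 y3 : H q)
    {ι κ : Type*} (r1 : Coalgebra.Repr k h1 ι) (s1 : Coalgebra.Repr k g1 κ) :
    ∑ j ∈ r1.index, ∑ l ∈ s1.index,
      A.mul (G.mul (G.inv (G.mul p q)) p) (G.inv p)
        (A.mul (G.inv (G.mul p q)) p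
          (A.antipode (G.mul p q) (A.mul p q (r1.left j) (s1.left l)))
          (gcl (k := k) (G.mul_inv_cancel q p)
            (A.mul (G.mul p q) (G.inv q)
              (A.mul p q (r1.right j) (s1.right l))
              (A.antipode q y3))))
        (A.antipode p x3)
      = gcl (k := k)
          ((G.mul_inv_rev p q).symm.trans (G.mul_inv_cancel p (G.inv (G.mul p q))).symm)
          ((Coalgebra.counit (R := k) h1 * Coalgebra.counit (R := k) g1) •
            A.mul (G.inv q) (G.inv p) (A.antipode q y3) (A.antipode p x3)) := by
  have t1 : ∀ j l,
      A.mul (G.mul (G.inv (G.mul p q)) p) (G.inv p)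
        (A.mul (G.inv (G.mul p q)) p
          (A.antipode (G.mul p q) (A.mul p q (r1.left j) (s1.left l)))
          (gcl (k := k) (G.mul_inv_cancel q p)
            (A.mul (G.mul p q) (G.inv q)
              (A.mul p q (r1.right j) (s1.right l))
              (A.antipode q y3))))
        (A.antipode p x3)
      = gcl (k := k)
          (congrArg (fun t => G.mul t (G.inv p))
            (congrArg (G.mul (G.inv (G.mul p q))) (G.mul_inv_cancel q p)))
          (A.mul (G.mul (G.inv (G.mul p q)) (G.mul (G.mul p q) (G.inv q))) (G.inv p)
            (A.mul (G.inv (G.mul p q)) (G.mul (G.mul p q) (G.inv q))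
              (A.antipode (G.mul p q) (A.mul p q (r1.left j) (s1.left l)))
              (A.mul (G.mul p q) (G.inv q)
                (A.mul p q (r1.right j) (s1.right l))
                (A.antipode q y3)))
            (A.antipode p x3)) := by
    intro j l
    rw [mul_gcl_right A (G.mul_inv_cancel q p), mul_gcl_left A]
  simp only [t1]
  have fold : ∑ j ∈ r1.index, ∑ l ∈ s1.index,
      gcl (k := k)
          (congrArg (fun t => G.mul t (G.inv p))
            (congrArg (G.mul (G.inv (G.mul p q))) (G.mul_inv_cancel q p)))
        (A.mul (G.mul (G.inv (G.mul p q)) (G.mul (G.mul p q) (G.inv q))) (G.inv p)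
          (A.mul (G.inv (G.mul p q)) (G.mul (G.mul p q) (G.inv q))
            (A.antipode (G.mul p q) (A.mul p q (r1.left j) (s1.left l)))
            (A.mul (G.mul p q) (G.inv q)
              (A.mul p q (r1.right j) (s1.right l))
              (A.antipode q y3)))
          (A.antipode p x3))
      = gcl (k := k)
          (congrArg (fun t => G.mul t (G.inv p))
            (congrArg (G.mul (G.inv (G.mul p q))) (G.mul_inv_cancel q p)))
        (A.mul (G.mul (G.inv (G.mul p q)) (G.mul (G.mul p q) (G.inv q))) (G.inv p)
          (∑ j ∈ r1.index, ∑ l ∈ s1.index,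
            A.mul (G.inv (G.mul p q)) (G.mul (G.mul p q) (G.inv q))
              (A.antipode (G.mul p q) (A.mul p q (r1.left j) (s1.left l)))
              (A.mul (G.mul p q) (G.inv q)
                (A.mul p q (r1.right j) (s1.right l))
                (A.antipode q y3)))
          (A.antipode p x3)) := by
    simp only [map_sum, LinearMap.sum_apply]
  rw [fold]
  have key := ax1_pt A (G.mul p q) (G.inv q) (A.mul p q h1 g1) (A.antipode q y3)
    (mulRepr A p q h1 g1 r1 s1)
  simp only [mulRepr] at key
  rw [Finset.sum_product] at key
  rw [key, A.counit_mul p q h1 g1]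
  rw [mul_gcl_left A (G.inv_mul_cancel (G.mul p q) (G.inv q)).symm]
  rw [gcl_gcl]
  simp only [map_smul, LinearMap.smul_apply]

end StepC
/-- The antipode is anti-multiplicative: `S_{pq}(hg) = S_q(g) S_p(h)`. -/
theorem gradedHopfQuasigroup_antipode_mul (A : GradedHopfQuasigroup k G H)
    (p q : Q) (h : H p) (g : H q) :
    A.antipode (G.mul p q) ((A.mul p q h) g)
      = gcl (k := k) (G.mul_inv_rev p q).symm
          ((A.mul (G.inv q) (G.inv p) (A.antipode q g)) (A.antipode p h)) := by
  classical
  let rh : Coalgebra.Repr k h (H p × H p) := Coalgebra.Repr.arbitrary k h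
  let rg : Coalgebra.Repr k g (H q × H q) := Coalgebra.Repr.arbitrary k g
  let rh1 : ∀ i : H p × H p, Coalgebra.Repr k (rh.left i) (H p × H p) :=
    fun i => Coalgebra.Repr.arbitrary k _
  let rh2 : ∀ i : H p × H p, Coalgebra.Repr k (rh.right i) (H p × H p) :=
    fun i => Coalgebra.Repr.arbitrary k _
  let rg1 : ∀ i : H q × H q, Coalgebra.Repr k (rg.left i) (H q × H q) :=
    fun i => Coalgebra.Repr.arbitrary k _
  let rg2 : ∀ i : H q × H q, Coalgebra.Repr k (rg.right i) (H q × H q) :=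
    fun i => Coalgebra.Repr.arbitrary k _
  -- coassociativity transfer in the `h` variable
  have hΦh := coassoc_tri h rh rh1 rh2 (LinearMap.mk₂ k
    (fun x1 x2 => (A.mul (G.mul (G.inv (G.mul p q)) p) (G.inv p)
        (A.mul (G.inv (G.mul p q)) p (A.antipode (G.mul p q) (A.mul p q x1 g)) x2)).comp
      (A.antipode p))
    (by intros; ext z; simp [map_add, LinearMap.add_apply])
    (by intros; ext z; simp [map_smul, LinearMap.smul_apply])
    (by intros; ext z; simp [map_add, LinearMap.add_apply])
    (by intros; ext z; simp [map_smul, LinearMap.smul_apply]))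
  simp only [LinearMap.mk₂_apply, LinearMap.comp_apply] at hΦh
  rw [stepA A p q h g rh rh2] at hΦh
  -- hΦh : Σ₂ = gcl eA (S (h g))
  -- per-term expansion of `g` followed by coassociativity transfer in the `g` variable
  have key2 : ∀ (x1 x2 x3 : H p),
      A.mul (G.mul (G.inv (G.mul p q)) p) (G.inv p)
        (A.mul (G.inv (G.mul p q)) p (A.antipode (G.mul p q) (A.mul p q x1 g)) x2)
        (A.antipode p x3)
      = ∑ kk ∈ rg.index, ∑ l ∈ (rg1 kk).index,
        A.mul (G.mul (G.inv (G.mul p q)) p) (G.inv p)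
          (A.mul (G.inv (G.mul p q)) p
            (A.antipode (G.mul p q) (A.mul p q x1 ((rg1 kk).left l)))
            (gcl (k := k) (G.mul_inv_cancel q p)
              (A.mul (G.mul p q) (G.inv q)
                (A.mul p q x2 ((rg1 kk).right l))
                (A.antipode q (rg.right kk)))))
          (A.antipode p x3) := by
    intro x1 x2 x3
    have hg := coassoc_tri g rg rg1 rg2 (LinearMap.mk₂ k
      (fun y1 y2 => ((A.mul (G.mul (G.inv (G.mul p q)) p) (G.inv p)).flip
          (A.antipode p x3)).comp
        ((A.mul (G.inv (G.mul p q)) p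
            (A.antipode (G.mul p q) (A.mul p q x1 y1))).comp
          ((gcl (k := k) (G.mul_inv_cancel q p)).comp
            ((A.mul (G.mul p q) (G.inv q) (A.mul p q x2 y2)).comp (A.antipode q)))))
      (by intros; ext z; simp [map_add, LinearMap.add_apply])
      (by intros; ext z; simp [map_smul, LinearMap.smul_apply])
      (by intros; ext z; simp [map_add, LinearMap.add_apply])
      (by intros; ext z; simp [map_smul, LinearMap.smul_apply]))
    simp only [LinearMap.mk₂_apply, LinearMap.comp_apply, LinearMap.flip_apply] at hg
    rw [← stepG A p q g rg rg2 x1 x2 x3]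
    exact hg.symm
  -- rewrite Σ₂ into the fully expanded quadruple sum Σ₄
  rw [Finset.sum_congr rfl (fun i _ => Finset.sum_congr rfl
    (fun j _ => key2 ((rh1 i).left j) ((rh1 i).right j) (rh.right i)))] at hΦh
  -- swap the `j` and `kk` summations
  conv at hΦh => lhs; enter [2, i]; rw [Finset.sum_comm]
  -- collapse the inner double sums using stepC
  rw [Finset.sum_congr rfl (fun i (_ : i ∈ rh.index) => Finset.sum_congr rfl
    (fun kk (_ : kk ∈ rg.index) =>
      stepC A p q (rh.left i) (rh.right i) (rg.left kk) (rg.right kk) (rh1 i) (rg1 kk)))] at hΦh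
  -- evaluate the remaining counit sums
  have final : ∑ i ∈ rh.index, ∑ kk ∈ rg.index,
      gcl (k := k)
        ((G.mul_inv_rev p q).symm.trans (G.mul_inv_cancel p (G.inv (G.mul p q))).symm)
        ((Coalgebra.counit (R := k) (rh.left i) * Coalgebra.counit (R := k) (rg.left kk)) •
          A.mul (G.inv q) (G.inv p) (A.antipode q (rg.right kk)) (A.antipode p (rh.right i)))
      = gcl (k := k)
          ((G.mul_inv_rev p q).symm.trans (G.mul_inv_cancel p (G.inv (G.mul p q))).symm)
          (A.mul (G.inv q) (G.inv p) (A.antipode q g) (A.antipode p h)) := by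
    calc ∑ i ∈ rh.index, ∑ kk ∈ rg.index,
        gcl (k := k)
          ((G.mul_inv_rev p q).symm.trans (G.mul_inv_cancel p (G.inv (G.mul p q))).symm)
          ((Coalgebra.counit (R := k) (rh.left i) * Coalgebra.counit (R := k) (rg.left kk)) •
            A.mul (G.inv q) (G.inv p) (A.antipode q (rg.right kk)) (A.antipode p (rh.right i)))
        = gcl (k := k)
          ((G.mul_inv_rev p q).symm.trans (G.mul_inv_cancel p (G.inv (G.mul p q))).symm)
          (∑ i ∈ rh.index, ∑ kk ∈ rg.index,
            (Coalgebra.counit (R := k) (rh.left i) * Coalgebra.counit (R := k) (rg.left kk)) •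
              A.mul (G.inv q) (G.inv p) (A.antipode q (rg.right kk))
                (A.antipode p (rh.right i))) := by
          simp only [map_sum]
      _ = _ := by
          congr 1
          conv_rhs => rw [show g = ∑ kk ∈ rg.index,
              Coalgebra.counit (R := k) (rg.left kk) • rg.right kk
              from (sum_counit_smul_left g rg).symm,
            show h = ∑ i ∈ rh.index,
              Coalgebra.counit (R := k) (rh.left i) • rh.right i
              from (sum_counit_smul_left h rh).symm]
          simp [map_sum, map_smul, LinearMap.sum_apply, LinearMap.smul_apply,
            Finset.sum_smul, Finset.smul_sum, smul_smul, mul_comm]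
  rw [final] at hΦh
  have := eq_gcl_symm hΦh.symm
  rw [gcl_gcl] at this
  exact this
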